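/- arXiv:1309.2877 — 2 statements merged into one kernel-verified Lean document; each statement's English description precedes it below -/
import Mathlib

section
/- Let $s,a \in \mathbb{C}$ with $\Re(a) > 0$ and $\Re(s) > 1$, and let $N, M \geq 1$ be integers. Then $\sum_{k=0}^{\infty} (a+k)^{-s} = S + I + T + R$, where $S = \sum_{k=0}^{N-1} (a+k)^{-s}$, $I = (a+N)^{1-s}/(s-1)$, $T = (a+N)^{-s}\bigl(\tfrac{1}{2} + \sum_{k=1}^{M} \tfrac{B_{2k}}{(2k)!} \tfrac{(s)_{2k-1}}{(a+N)^{2k-1}}\bigr)$, and $R = -\int_N^{\infty} \tfrac{\tilde B_{2M}(t)}{(2M)!} (s)_{2M} (a+t)^{-(s+2M)} \, dt$. -/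
open MeasureTheory

/-- The periodic Bernoulli polynomial `B̃ n (t) = B n (t - ⌊t⌋)`. -/
noncomputable def periodicBernoulli (n : ℕ) (t : ℝ) : ℝ :=
  ((Polynomial.bernoulli n).map (algebraMap ℚ ℝ)).eval (Int.fract t)

namespace EMHurwitz

open Complex Filter Set Polynomial Topology

/-- The real Bernoulli polynomial. -/
noncomputable def rB (j : ℕ) : Polynomial ℝ := (Polynomial.bernoulli j).map (algebraMap ℚ ℝ)

lemma pB_def (j : ℕ) (t : ℝ) : periodicBernoulli j t = (rB j).eval (Int.fract t) := rfl

lemma rB_deriv_eval (j : ℕ) (x : ℝ) :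
    (rB (j+1)).derivative.eval x = ((j:ℝ)+1) * (rB j).eval x := by
  unfold rB
  rw [Polynomial.derivative_map, Polynomial.derivative_bernoulli_add_one, Polynomial.map_mul]
  simp [Polynomial.eval_mul]

lemma rB_eval_zero (j : ℕ) : (rB j).eval 0 = (bernoulli j : ℝ) := by
  unfold rB
  rw [Polynomial.eval_zero_map, Polynomial.bernoulli_eval_zero]
  exact eq_ratCast _ _

lemma rB_eval_one (j : ℕ) : (rB j).eval 1 = (bernoulli' j : ℝ) := by
  unfold rB
  rw [Polynomial.eval_one_map, Polynomial.bernoulli_eval_one]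
  exact eq_ratCast _ _

lemma pB_zero (t : ℝ) : periodicBernoulli 0 t = 1 := by
  rw [pB_def]; unfold rB; simp

/-- The scaled power function `h m t = (s)_m (a+t)^{-(s+m)}`. -/
noncomputable def hh (s a : ℂ) (m : ℕ) (t : ℝ) : ℂ :=
  (ascPochhammer ℂ m).eval s * (a + t) ^ (-(s + m))

lemma hh_zero (s a : ℂ) (t : ℝ) : hh s a 0 t = (a + t) ^ (-s) := by
  simp [hh]

variable {s a : ℂ}

lemma slit (ha : 0 < a.re) {t : ℝ} (ht : 0 ≤ t) : a + (t : ℂ) ∈ Complex.slitPlane := by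
  refine Or.inl ?_
  simp only [Complex.add_re, Complex.ofReal_re]
  linarith

lemma hh_deriv (ha : 0 < a.re) (m : ℕ) {t : ℝ} (ht : 0 ≤ t) :
    HasDerivAt (hh s a m) (-(hh s a (m+1) t)) t := by
  have h1 : HasDerivAt (fun u : ℝ => a + (u : ℂ)) 1 t := by
    simpa using ((hasDerivAt_id t).ofReal_comp (z := t)).const_add a
  have hc : HasDerivAt (fun z : ℂ => z ^ (-(s + (m:ℂ))))
      (-(s + (m:ℂ)) * (a + (t:ℂ)) ^ (-(s + (m:ℂ)) - 1)) (a + (t:ℂ)) :=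
    (Complex.hasStrictDerivAt_cpow_const (slit ha ht)).hasDerivAt
  have h2' : HasDerivAt (fun u : ℝ => (a + (u:ℂ)) ^ (-(s + (m:ℂ))))
      (-(s 
+ (m:ℂ)) * (a + (t:ℂ)) ^ (-(s + (m:ℂ)) - 1)) t := by
    simpa [Function.comp_def] using hc.comp t h1
  have h2 := h2'.const_mul ((ascPochhammer ℂ m).eval s)
  refine h2.congr_deriv ?_
  have he : -(s + (m:ℂ)) - 1 = -(s + ((m:ℕ)+1 : ℕ)) := by push_cast; ring
  have hP : (ascPochhammer ℂ (m+1)).eval s = (ascPochhammer ℂ m).eval s * (s + m) := by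
    rw [ascPochhammer_succ_right]
    simp [Polynomial.eval_mul]
  unfold hh
  rw [hP, ← he]
  ring

lemma hh_contOn (ha : 0 < a.re) (m : ℕ) : ContinuousOn (hh s a m) (Ici (0:ℝ)) :=
  fun t ht => (hh_deriv ha m ht).continuousAt.continuousWithinAt

lemma norm_cpow_le (ha : 0 < a.re) (w : ℂ) (hw : w.re ≤ 0) {t : ℝ} (ht : 0 < t) :
    ‖(a + (t:ℂ)) ^ w‖ ≤ Real.exp (Real.pi * |w.im|) * t ^ w.re := by
  have hz : 0 < (a + (t:ℂ)).re := by
    simp only [Complex.add_re, Complex.ofReal_re]; linarith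
  have hz0 : (a + (t:ℂ)) ≠ 0 := by
    intro h; rw [h] at hz; simp at hz
  rw [Complex.norm_cpow_of_ne_zero hz0]
  have hta : (t:ℝ) ≤ ‖a + (t:ℂ)‖ := by
    refine le_trans ?_ (Complex.re_le_norm _)
    simp only [Complex.add_re, Complex.ofReal_re]; linarith
  have h1 : ‖a + (t:ℂ)‖ ^ w.re ≤ t ^ w.re :=
    Real.rpow_le_rpow_of_nonpos ht hta hw
  have h2 : Real.exp (-(Real.pi * |w.im|)) ≤ Real.exp (Complex.arg (a + (t:ℂ)) * w.im) := by
    rw [Real.exp_le_exp]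
    have harg := Complex.abs_arg_le_pi (a + (t:ℂ))
    have : |Complex.arg (a + (t:ℂ)) * w.im| ≤ Real.pi * |w.im| := by
      rw [abs_mul]
      exact mul_le_mul_of_nonneg_right harg (abs_nonneg _)
    linarith [neg_abs_le (Complex.arg (a + (t:ℂ)) * w.im)]
  calc ‖a + (t:ℂ)‖ ^ w.re / Real.exp (Complex.arg (a + (t:ℂ)) * w.im)
      ≤ t ^ w.re / Real.exp (-(Real.pi * |w.im|)) :=
        div_le_div₀ (Real.rpow_nonneg ht.le _) h1 (Real.exp_pos _) h2
    _ = Real.exp (Real.pi * |w.im|) * t ^ w.re := by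
        rw [div_eq_mul_inv, Real.exp_neg, inv_inv]; ring

lemma exp_re_neg (m : ℕ) : (-(s + (m:ℂ))).re = -(s.re + m) := by
  simp [Complex.add_re]

lemma norm_hh_le (hs : 1 < s.re) (ha : 0 < a.re) (m : ℕ) {t : ℝ} (ht : 0 < t) :
    ‖hh s a m t‖ ≤ (‖(ascPochhammer ℂ m).eval s‖ * Real.exp (Real.pi * |s.im|))
      * t ^ (-(s.re + m)) := by
  have hw : (-(s + (m:ℂ))).re ≤ 0 := by
    rw [exp_re_neg]
    have : (0:ℝ) ≤ m := Nat.cast_nonneg m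
    linarith
  have him : |(-(s + (m:ℂ))).im| = |s.im| := by
    simp [Complex.add_im]
  have := norm_cpow_le ha (-(s + (m:ℂ))) hw ht
  rw [him, exp_re_neg] at this
  calc ‖hh s a m t‖ = ‖(ascPochhammer ℂ m).eval s‖ * ‖(a + (t:ℂ)) ^ (-(s + (m:ℂ)))‖ := by
        rw [hh, norm_mul]
    _ ≤ ‖(ascPochhammer ℂ m).eval s‖ * (Real.exp (Real.pi * |s.im|) * t ^ (-(s.re + m))) :=
        mul_le_mul_of_nonneg_left this (norm_nonneg _)
    _ = _ := by ring

lemma pB_bound (j : ℕ) : ∃ C : ℝ, 0 ≤ C ∧ ∀ t : ℝ, |periodicBernoulli j t| ≤ C := by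
  obtain ⟨C, hC⟩ := (isCompact_Icc (a := (0:ℝ)) (b := 1)).exists_bound_of_continuousOn
    ((rB j).continuous_aeval.continuousOn : ContinuousOn (fun x => (rB j).eval x) _)
  refine ⟨C, le_trans (abs_nonneg _) (by simpa using hC 0 (by norm_num)), fun t => ?_⟩
  have := hC (Int.fract t) ⟨Int.fract_nonneg t, (Int.fract_lt_one t).le⟩
  simpa [pB_def, Real.norm_eq_abs] using this

lemma integrableOn_pB_hh (hs : 1 < s.re) (ha : 0 < a.re) (N j m : ℕ) (hN : 1 ≤ N) :
    IntegrableOn (fun t => (periodicBernoulli j t : ℂ) * hh s a m t) (Ioi (N:ℝ)) := by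
  obtain ⟨C, hC0, hC⟩ := pB_bound j
  set D := ‖(ascPochhammer ℂ m).eval s‖ * Real.exp (Real.pi * |s.im|) with hD
  have hD0 : 0 ≤ D := mul_nonneg (norm_nonneg _) (Real.exp_pos _).le
  have hNpos : (0:ℝ) < (N:ℝ) := by exact_mod_cast Nat.lt_of_lt_of_le Nat.zero_lt_one hN
  have hexp : -(s.re + m) < -1 := by
    have : (0:ℝ) ≤ m := Nat.cast_nonneg m
    linarith
  have hg : IntegrableOn (fun t : ℝ => (C * D) * t ^ (-(s.re + m))) (Ioi (N:ℝ)) :=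
    (integrableOn_Ioi_rpow_of_lt hexp hNpos).const_mul _
  have hmeas : AEStronglyMeasurable (fun t => (periodicBernoulli j t : ℂ) * hh s a m t)
      (volume.restrict (Ioi (N:ℝ))) := by
    refine AEStronglyMeasurable.mul ?_ ?_
    · exact (Complex.measurable_ofReal.comp
        (((rB j).continuous_aeval.measurable).comp measurable_fract)).aestronglyMeasurable
    · exact ((hh_contOn ha m).mono (fun x hx => le_of_lt (lt_of_le_of_lt hNpos.le
        (mem_Ioi.mp hx)) : Ioi (N:ℝ) ⊆ Ici 0)).aestronglyMeasurable measurableSet_Ioi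
  refine Integrable.mono' hg hmeas ?_
  refine (ae_restrict_iff' measurableSet_Ioi).mpr (ae_of_all _ fun t ht => ?_)
  have htpos : 0 < t := lt_of_le_of_lt hNpos.le (mem_Ioi.mp ht)
  have h1 : ‖((periodicBernoulli j t : ℝ) : ℂ)‖ = |periodicBernoulli j t| := by
    rw [Complex.norm_real, Real.norm_eq_abs]
  rw [norm_mul, h1]
  calc |periodicBernoulli j t| * ‖hh s a m t‖
      ≤ C * (D * t ^ (-(s.re + m))) :=
        mul_le_mul (hC t) (norm_hh_le hs ha m htpos) (norm_nonneg _) hC0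
    _ = (C * D) * t ^ (-(s.re + m)) := by ring

lemma integrableOn_hh (hs : 1 < s.re) (ha : 0 < a.re) (N m : ℕ) (hN : 1 ≤ N) :
    IntegrableOn (hh s a m) (Ioi (N:ℝ)) := by
  have := integrableOn_pB_hh hs ha N 0 m hN
  simpa [pB_zero] using this

lemma intervalIntegrable_pB_hh (hs : 1 < s.re) (ha : 0 < a.re) (c j m : ℕ) (hc : 1 ≤ c) :
    IntervalIntegrable (fun t => (periodicBernoulli j t : ℂ) * hh s a m t) volume
      (c:ℝ) ((c:ℝ)+1) := by
  rw [intervalIntegrable_iff]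
  refine (integrableOn_pB_hh hs ha c j m hc).mono_set ?_
  rw [Set.uIoc_of_le (by linarith : (c:ℝ) ≤ (c:ℝ)+1)]
  exact Set.Ioc_subset_Ioi_self

lemma integral_pB_congr (j c : ℕ) (F : ℝ → ℂ) :
    ∫ t in (c:ℝ)..((c:ℝ)+1), (periodicBernoulli j t : ℂ) * F t
      = ∫ t in (c:ℝ)..((c:ℝ)+1), (((rB j).eval (t - (c:ℝ)) : ℝ) : ℂ) * F t := by
  apply intervalIntegral.integral_congr_ae
  rw [MeasureTheory.ae_iff]
  refine measure_mono_null (fun x hx => ?_) (measure_singleton ((c:ℝ)+1))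
  simp only [Set.mem_setOf_eq, _root_.not_imp] at hx
  obtain ⟨hxI, hne⟩ := hx
  rw [Set.uIoc_of_le (by linarith : (c:ℝ) ≤ (c:ℝ)+1)] at hxI
  obtain ⟨hx1, hx2⟩ := hxI
  by_contra hxs
  have hxlt : x < (c:ℝ) + 1 := lt_of_le_of_ne hx2 (by simpa using hxs)
  have hfl : ⌊x⌋ = (c:ℤ) := by
    rw [Int.floor_eq_iff]
    constructor <;> push_cast <;> linarith
  have : Int.fract x = x - (c:ℝ) := by
    rw [Int.fract, hfl]; push_cast; ring
  exact hne (by rw [pB_def, this])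

lemma ibp_interval (hs : 1 < s.re) (ha : 0 < a.re) (j m c : ℕ) (hc : 1 ≤ c) :
    ∫ t in (c:ℝ)..((c:ℝ)+1), (periodicBernoulli (j+1) t : ℂ) * (-(hh s a (m+1) t))
      = (((rB (j+1)).eval 1 : ℝ) : ℂ) * hh s a m ((c:ℝ)+1)
        - ((bernoulli (j+1) : ℝ) : ℂ) * hh s a m (c:ℝ)
        - ((j:ℂ)+1) * ∫ t in (c:ℝ)..((c:ℝ)+1), (periodicBernoulli j t : ℂ) * hh s a m t := by
  have hle : (c:ℝ) ≤ (c:ℝ)+1 := by linarith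
  have huIcc : Set.uIcc (c:ℝ) ((c:ℝ)+1) = Set.Icc (c:ℝ) ((c:ℝ)+1) := Set.uIcc_of_le hle
  have hc0 : (0:ℝ) ≤ (c:ℝ) := Nat.cast_nonneg c
  set u : ℝ → ℂ := fun t => (((rB (j+1)).eval (t - (c:ℝ)) : ℝ) : ℂ) with hu_def
  set u' : ℝ → ℂ := fun t => ((((j:ℝ)+1) * (rB j).eval (t - (c:ℝ)) : ℝ) : ℂ) with hu'_def
  have hu : ∀ x ∈ Set.uIcc (c:ℝ) ((c:ℝ)+1), HasDerivAt u (u' x) x := by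
    intro x _
    have h0 : HasDerivAt (fun t : ℝ => (rB (j+1)).eval (t - (c:ℝ)))
        ((rB (j+1)).derivative.eval (x - (c:ℝ))) x := by
      have := ((rB (j+1)).hasDerivAt (x - (c:ℝ))).comp x
        ((hasDerivAt_id x).sub_const (c:ℝ))
      simpa [Function.comp_def] using this
    have h1 := h0.ofReal_comp
    have : u' x = (((rB (j+1)).derivative.eval (x - (c:ℝ)) : ℝ) : ℂ) := by
      rw [hu'_def, rB_deriv_eval]
    rw [this]
    exact h1
  have hv : ∀ x ∈ Set.uIcc (c:ℝ) ((c:ℝ)+1), HasDerivAt (hh s a m) (-(hh s a (m+1) x)) x := by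
    intro x hx
    rw [huIcc] at hx
    exact hh_deriv ha m (le_trans hc0 hx.1)
  have hu'int : IntervalIntegrable u' volume (c:ℝ) ((c:ℝ)+1) := by
    apply Continuous.intervalIntegrable
    have : Continuous fun t : ℝ => ((j:ℝ)+1) * (rB j).eval (t - (c:ℝ)) :=
      continuous_const.mul ((rB j).continuous_aeval.comp (continuous_id.sub continuous_const))
    exact Complex.continuous_ofReal.comp this
  have hv'int : IntervalIntegrable (fun x => -(hh s a (m+1) x)) volume (c:ℝ) ((c:ℝ)+1) := by
    apply ContinuousOn.intervalIntegrable
    rw [huIcc]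
    exact (((hh_contOn ha (m+1)).mono (fun x hx => le_trans hc0 hx.1)).neg :
      ContinuousOn _ (Set.Icc (c:ℝ) ((c:ℝ)+1)))
  have key := intervalIntegral.integral_mul_deriv_eq_deriv_mul hu hv hu'int hv'int
  have lhs_eq : ∫ t in (c:ℝ)..((c:ℝ)+1), (periodicBernoulli (j+1) t : ℂ) * (-(hh s a (m+1) t))
      = ∫ t in (c:ℝ)..((c:ℝ)+1), u t * (-(hh s a (m+1) t)) :=
    integral_pB_congr (j+1) c _
  have rhs_eq : ∫ t in (c:ℝ)..((c:ℝ)+1), u' t * hh s a m t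
      = ((j:ℂ)+1) * ∫ t in (c:ℝ)..((c:ℝ)+1), (periodicBernoulli j t : ℂ) * hh s a m t := by
    rw [integral_pB_congr j c (hh s a m), ← intervalIntegral.integral_const_mul]
    apply intervalIntegral.integral_congr
    intro x _
    rw [hu'_def]
    push_cast
    ring
  have hu_top : u ((c:ℝ)+1) = (((rB (j+1)).eval 1 : ℝ) : ℂ) := by
    rw [hu_def]; norm_num
  have hu_bot : u (c:ℝ) = ((bernoulli (j+1) : ℝ) : ℂ) := by
    rw [hu_def]; simp [rB_eval_zero]
  rw [lhs_eq, key, hu_top, hu_bot, rhs_eq]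

lemma sum_ibp (hs : 1 < s.re) (ha : 0 < a.re) (j m N L : ℕ) (hN : 1 ≤ N) :
    ∫ t in (N:ℝ)..((N+L:ℕ):ℝ), (periodicBernoulli (j+1) t : ℂ) * (-(hh s a (m+1) t))
      = ((((rB (j+1)).eval 1 - (bernoulli (j+1):ℝ) : ℝ)):ℂ)
          * (∑ i ∈ Finset.range L, hh s a m ((N+i:ℕ):ℝ))
        + (((rB (j+1)).eval 1 : ℝ):ℂ) * (hh s a m ((N+L:ℕ):ℝ) - hh s a m (N:ℝ))
        - ((j:ℂ)+1) * ∫ t in (N:ℝ)..((N+L:ℕ):ℝ), (periodicBernoulli j t : ℂ) * hh s a m t := by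
  set aseq : ℕ → ℝ := fun k => ((N+k:ℕ):ℝ) with haseq
  have hstep : ∀ k : ℕ, aseq (k+1) = ((N+k:ℕ):ℝ) + 1 := by
    intro k; rw [haseq]; push_cast; ring
  have ha0 : aseq 0 = (N:ℝ) := by rw [haseq]; norm_num
  have hFneg : (fun t => (periodicBernoulli (j+1) t : ℂ) * (-(hh s a (m+1) t)))
      = fun t => -((periodicBernoulli (j+1) t : ℂ) * hh s a (m+1) t) := by
    funext t; ring
  have hint1 : ∀ k, k < L → IntervalIntegrable
      (fun t => (periodicBernoulli (j+1) t : ℂ) * (-(hh s a (m+1) t))) volume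
      (aseq k) (aseq (k+1)) := by
    intro k _
    rw [hstep k, hFneg]
    exact (intervalIntegrable_pB_hh hs ha (N+k) (j+1) (m+1) (le_add_right hN)).neg
  have hint2 : ∀ k, k < L → IntervalIntegrable
      (fun t => (periodicBernoulli j t : ℂ) * hh s a m t) volume (aseq k) (aseq (k+1)) := by
    intro k _
    rw [hstep k]
    exact intervalIntegrable_pB_hh hs ha (N+k) j m (le_add_right hN)
  have adj1 := intervalIntegral.sum_integral_adjacent_intervals (f := fun t =>
    (periodicBernoulli (j+1) t : ℂ) * (-(hh s a (m+1) t))) (μ := volume) (a := aseq) hint1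
  have adj2 := intervalIntegral.sum_integral_adjacent_intervals (f := fun t =>
    (periodicBernoulli j t : ℂ) * hh s a m t) (μ := volume) (a := aseq) hint2
  rw [ha0] at adj1 adj2
  set g : ℕ → ℂ := fun k => hh s a m (aseq k) with hg
  set I : ℕ → ℂ := fun k => ∫ t in (aseq k)..(aseq (k+1)),
    (periodicBernoulli j t : ℂ) * hh s a m t with hI
  set E1 : ℂ := (((rB (j+1)).eval 1 : ℝ):ℂ) with hE1
  set E0 : ℂ := ((bernoulli (j+1) : ℝ):ℂ) with hE0
  have key : ∀ k, k < L → (∫ t in (aseq k)..(aseq (k+1)),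
      (periodicBernoulli (j+1) t : ℂ) * (-(hh s a (m+1) t)))
      = E1 * g (k+1) - E0 * g k - ((j:ℂ)+1) * I k := by
    intro k _
    rw [hg, hI]
    simp only [hstep k]
    exact ibp_interval hs ha j m (N+k) (le_add_right hN)
  have tele : ∑ k ∈ Finset.range L, g (k+1)
      = (∑ k ∈ Finset.range L, g k) + g L - g 0 := by
    have h1 := Finset.sum_range_succ' g L
    have h2 := Finset.sum_range_succ g L
    rw [h2] at h1
    linear_combination -h1
  calc ∫ t in (N:ℝ)..((N+L:ℕ):ℝ), (periodicBernoulli (j+1) t : ℂ) * (-(hh s a (m+1) t))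
      = ∑ k ∈ Finset.range L, (E1 * g (k+1) - E0 * g k - ((j:ℂ)+1) * I k) := by
        rw [← adj1]
        refine (Finset.sum_congr rfl fun k hk => ?_).symm
        simpa using (key k (Finset.mem_range.mp hk)).symm
    _ = E1 * (∑ k ∈ Finset.range L, g (k+1)) - E0 * (∑ k ∈ Finset.range L, g k)
          - ((j:ℂ)+1) * (∑ k ∈ Finset.range L, I k) := by
        rw [Finset.sum_sub_distrib, Finset.sum_sub_distrib, ← Finset.mul_sum, ← Finset.mul_sum,
          ← Finset.mul_sum]
    _ = _ := by
        rw [tele, adj2, hg, hE1, hE0]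
        simp only [haseq]
        push_cast
        ring

lemma tendsto_aseq (N : ℕ) : Tendsto (fun L : ℕ => ((N+L:ℕ):ℝ)) atTop atTop := by
  apply tendsto_atTop_mono (fun L => ?_) tendsto_natCast_atTop_atTop
  exact_mod_cast Nat.le_add_left L N

lemma tendsto_intIoi (N : ℕ) (F : ℝ → ℂ) (hF : IntegrableOn F (Ioi (N:ℝ))) :
    Tendsto (fun L : ℕ => ∫ t in (N:ℝ)..((N+L:ℕ):ℝ), F t) atTop
      (𝓝 (∫ t in Ioi (N:ℝ), F t)) :=
  intervalIntegral_tendsto_integral_Ioi _ hF (tendsto_aseq N)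

lemma tendsto_cpow_zero (ha : 0 < a.re) (w : ℂ) (hw : w.re < 0) (N : ℕ) (hN : 1 ≤ N) :
    Tendsto (fun L : ℕ => (a + (((N+L:ℕ):ℝ):ℂ)) ^ w) atTop (𝓝 0) := by
  apply squeeze_zero_norm' (a := fun L : ℕ => Real.exp (Real.pi * |w.im|) * ((N+L:ℕ):ℝ) ^ w.re)
  · refine Filter.Eventually.of_forall fun L => ?_
    have hpos : (0:ℝ) < ((N+L:ℕ):ℝ) := by
      have : 1 ≤ N + L := le_trans hN (Nat.le_add_right N L)
      exact_mod_cast Nat.lt_of_lt_of_le Nat.zero_lt_one this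
    exact norm_cpow_le ha w hw.le hpos
  · have h1 : Tendsto (fun x : ℝ => x ^ w.re) atTop (𝓝 0) := by
      simpa [neg_neg] using tendsto_rpow_neg_atTop (y := -w.re) (by linarith)
    simpa using (h1.comp (tendsto_aseq N)).const_mul (Real.exp (Real.pi * |w.im|))

lemma tendsto_hh_zero (hs : 1 < s.re) (ha : 0 < a.re) (m N : ℕ) (hN : 1 ≤ N) :
    Tendsto (fun L : ℕ => hh s a m ((N+L:ℕ):ℝ)) atTop (𝓝 0) := by
  have hw : (-(s + (m:ℂ))).re < 0 := by
    rw [exp_re_neg]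
    have : (0:ℝ) ≤ m := Nat.cast_nonneg m
    linarith
  have := (tendsto_cpow_zero ha (-(s + (m:ℂ))) hw N hN).const_mul
    ((ascPochhammer ℂ m).eval s)
  simpa [hh] using this

lemma summable_hh_tail (hs : 1 < s.re) (ha : 0 < a.re) (N : ℕ) (hN : 1 ≤ N) :
    Summable (fun i : ℕ => hh s a 0 ((N+i:ℕ):ℝ)) := by
  set D := ‖(ascPochhammer ℂ 0).eval s‖ * Real.exp (Real.pi * |s.im|) with hD
  apply Summable.of_norm_bounded (g := fun i : ℕ => D * ((i+1:ℕ):ℝ) ^ (-s.re))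
  · refine Summable.mul_left D ?_
    have h1 : Summable (fun n : ℕ => (n:ℝ) ^ (-s.re)) :=
      Real.summable_nat_rpow.mpr (by linarith)
    exact_mod_cast (summable_nat_add_iff 1).mpr h1
  · intro i
    have hi1 : (0:ℝ) < ((i+1:ℕ):ℝ) := by positivity
    have hle : ((i+1:ℕ):ℝ) ≤ ((N+i:ℕ):ℝ) := by
      have : i + 1 ≤ N + i := by omega
      exact_mod_cast this
    have h2 : ((N+i:ℕ):ℝ) ^ (-s.re) ≤ ((i+1:ℕ):ℝ) ^ (-s.re) :=
      Real.rpow_le_rpow_of_nonpos hi1 hle (by linarith)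
    have h3 := norm_hh_le hs ha 0 (lt_of_lt_of_le hi1 hle)
    calc ‖hh s a 0 ((N+i:ℕ):ℝ)‖ ≤ D * ((N+i:ℕ):ℝ) ^ (-(s.re + (0:ℕ))) := h3
      _ = D * ((N+i:ℕ):ℝ) ^ (-s.re) := by norm_num
      _ ≤ D * ((i+1:ℕ):ℝ) ^ (-s.re) := by
          refine mul_le_mul_of_nonneg_left h2 ?_
          exact mul_nonneg (norm_nonneg _) (Real.exp_pos _).le

lemma integral_hh0 (hs : 1 < s.re) (ha : 0 < a.re) (N : ℕ) (hN : 1 ≤ N) :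
    ∫ t in Ioi (N:ℝ), hh s a 0 t = (a + (N:ℂ)) ^ (1 - s) / (s - 1) := by
  have hs1 : (1:ℂ) - s ≠ 0 := by
    intro h
    have : s = 1 := by linear_combination -h
    rw [this] at hs; norm_num at hs
  set φ : ℝ → ℂ := fun t => (a + (t:ℂ)) ^ ((1:ℂ) - s) / (1 - s) with hφ
  have hderiv : ∀ x : ℝ, 0 ≤ x → HasDerivAt φ (hh s a 0 x) x := by
    intro x hx
    have h1 : HasDerivAt (fun u : ℝ => a + (u : ℂ)) 1 x := by
      simpa using ((hasDerivAt_id x).ofReal_comp (z := x)).const_add a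
    have hc : HasDerivAt (fun z : ℂ => z ^ ((1:ℂ) - s))
        (((1:ℂ) - s) * (a + (x:ℂ)) ^ ((1:ℂ) - s - 1)) (a + (x:ℂ)) :=
      (Complex.hasStrictDerivAt_cpow_const (slit ha hx)).hasDerivAt
    have h2 : HasDerivAt (fun u : ℝ => (a + (u:ℂ)) ^ ((1:ℂ) - s))
        (((1:ℂ) - s) * (a + (x:ℂ)) ^ ((1:ℂ) - s - 1)) x := by
      simpa [Function.comp_def] using hc.comp x h1
    have h3 := h2.div_const (1 - s)
    refine h3.congr_deriv ?_
    unfold hh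
    have : (1:ℂ) - s - 1 = -(s + (0:ℕ)) := by push_cast; ring
    rw [this]
    field_simp
    simp [ascPochhammer_zero]
  have key : ∀ L : ℕ, ∫ t in (N:ℝ)..((N+L:ℕ):ℝ), hh s a 0 t = φ ((N+L:ℕ):ℝ) - φ (N:ℝ) := by
    intro L
    have hNle : (N:ℝ) ≤ ((N+L:ℕ):ℝ) := by exact_mod_cast Nat.le_add_right N L
    refine intervalIntegral.integral_eq_sub_of_hasDerivAt (fun x hx => ?_) ?_
    · rw [Set.uIcc_of_le hNle] at hx
      exact hderiv x (le_trans (Nat.cast_nonneg N) hx.1)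
    · apply ContinuousOn.intervalIntegrable
      rw [Set.uIcc_of_le hNle]
      exact (hh_contOn ha 0).mono fun x hx => le_trans (Nat.cast_nonneg N) hx.1
  have t1 := tendsto_intIoi N (hh s a 0) (integrableOn_hh hs ha N 0 hN)
  have t2 : Tendsto (fun L : ℕ => φ ((N+L:ℕ):ℝ) - φ (N:ℝ)) atTop (𝓝 (0 - φ (N:ℝ))) := by
    refine Tendsto.sub_const ?_ _
    have hw : ((1:ℂ) - s).re < 0 := by
      simp only [Complex.sub_re, Complex.one_re]
      linarith
    have := (tendsto_cpow_zero ha ((1:ℂ) - s) hw N hN).div_const (1 - s)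
    simpa [hφ] using this
  have hfin := tendsto_nhds_unique t1 (t2.congr fun L => (key L).symm)
  rw [hfin, hφ, zero_sub]
  have hs1' : s - 1 ≠ 0 := by
    intro h
    exact hs1 (by linear_combination -h)
  field_simp
  push_cast
  ring

lemma tail_eq (hs : 1 < s.re) (ha : 0 < a.re) (N M : ℕ) (hN : 1 ≤ N) (hM : 1 ≤ M) :
    ∑' i : ℕ, hh s a 0 ((N+i:ℕ):ℝ)
      = (a + (N:ℂ)) ^ (1 - s) / (s - 1) + hh s a 0 (N:ℝ) / 2
        + (∑ k ∈ Finset.Icc 1 M,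
            ((bernoulli (2*k) : ℝ):ℂ) / ((2*k).factorial : ℂ) * hh s a (2*k-1) (N:ℝ))
        - (∫ t in Ioi (N:ℝ), (periodicBernoulli (2*M) t : ℂ) * hh s a (2*M) t)
            / ((2*M).factorial : ℂ) := by
  set A : ℕ → ℂ := fun j => ∫ t in Ioi (N:ℝ), (periodicBernoulli j t : ℂ) * hh s a j t with hA
  have hIoiNeg : ∀ j m : ℕ, Tendsto (fun L : ℕ => ∫ t in (N:ℝ)..((N+L:ℕ):ℝ),
      (periodicBernoulli (j+1) t : ℂ) * (-(hh s a (m+1) t))) atTop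
      (𝓝 (-(∫ t in Ioi (N:ℝ), (periodicBernoulli (j+1) t : ℂ) * hh s a (m+1) t))) := by
    intro j m
    have hfun : (fun t => (periodicBernoulli (j+1) t : ℂ) * (-(hh s a (m+1) t)))
        = fun t => -((periodicBernoulli (j+1) t : ℂ) * hh s a (m+1) t) := by
      funext t; ring
    have hi : IntegrableOn (fun t => -((periodicBernoulli (j+1) t : ℂ) * hh s a (m+1) t))
        (Ioi (N:ℝ)) := (integrableOn_pB_hh hs ha N (j+1) (m+1) hN).neg
    have ht := tendsto_intIoi N _ hi
    rw [integral_neg] at ht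
    simp only [hfun]
    exact ht
  -- Base identity
  have hsummable := summable_hh_tail hs ha N hN
  have hbase : -(A 1)
      = (∑' i : ℕ, hh s a 0 ((N+i:ℕ):ℝ)) + (1/2 : ℂ) * (0 - hh s a 0 (N:ℝ))
        - ∫ t in Ioi (N:ℝ), hh s a 0 t := by
    have hE1 : ((rB 1).eval 1 : ℝ) = 1/2 := by rw [rB_eval_one, bernoulli'_one]; norm_num
    have hE0 : (bernoulli 1 : ℝ) = -(1/2) := by rw [_root_.bernoulli_one]; norm_num
    have hid : ∀ L : ℕ, (∫ t in (N:ℝ)..((N+L:ℕ):ℝ),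
          (periodicBernoulli 1 t : ℂ) * (-(hh s a 1 t)))
        = (∑ i ∈ Finset.range L, hh s a 0 ((N+i:ℕ):ℝ))
          + (1/2:ℂ) * (hh s a 0 ((N+L:ℕ):ℝ) - hh s a 0 (N:ℝ))
          - ∫ t in (N:ℝ)..((N+L:ℕ):ℝ), hh s a 0 t := by
      intro L
      have h := sum_ibp hs ha 0 0 N L hN
      simp only [zero_add, pB_zero, Complex.ofReal_one, one_mul] at h
      rw [hE1, hE0] at h
      push_cast at h ⊢
      linear_combination h
    have t1 := hIoiNeg 0 0
    have t2 : Tendsto (fun L : ℕ =>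
        (∑ i ∈ Finset.range L, hh s a 0 ((N+i:ℕ):ℝ))
          + (1/2:ℂ) * (hh s a 0 ((N+L:ℕ):ℝ) - hh s a 0 (N:ℝ))
          - ∫ t in (N:ℝ)..((N+L:ℕ):ℝ), hh s a 0 t) atTop
        (𝓝 ((∑' i : ℕ, hh s a 0 ((N+i:ℕ):ℝ)) + (1/2 : ℂ) * (0 - hh s a 0 (N:ℝ))
          - ∫ t in Ioi (N:ℝ), hh s a 0 t)) := by
      refine Tendsto.sub (Tendsto.add hsummable.hasSum.tendsto_sum_nat ?_)
        (tendsto_intIoi N (hh s a 0) (integrableOn_hh hs ha N 0 hN))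
      exact ((tendsto_hh_zero hs ha 0 N hN).sub_const _).const_mul _
    exact tendsto_nhds_unique t1 (t2.congr fun L => (hid L).symm)
  -- Step identity
  have hstepA : ∀ j : ℕ, 1 ≤ j →
      A (j+1) = ((bernoulli (j+1):ℝ):ℂ) * hh s a j (N:ℝ) + ((j:ℂ)+1) * A j := by
    intro j hj
    have hE : ((rB (j+1)).eval 1 : ℝ) = ((bernoulli (j+1):ℝ)) := by
      rw [rB_eval_one, bernoulli_eq_bernoulli'_of_ne_one (by omega)]
    have hid : ∀ L : ℕ, (∫ t in (N:ℝ)..((N+L:ℕ):ℝ),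
          (periodicBernoulli (j+1) t : ℂ) * (-(hh s a (j+1) t)))
        = ((bernoulli (j+1):ℝ):ℂ) * (hh s a j ((N+L:ℕ):ℝ) - hh s a j (N:ℝ))
          - ((j:ℂ)+1) * ∫ t in (N:ℝ)..((N+L:ℕ):ℝ),
              (periodicBernoulli j t : ℂ) * hh s a j t := by
      intro L
      have h := sum_ibp hs ha j j N L hN
      rw [hE] at h
      simp only [sub_self, Complex.ofReal_zero, zero_mul, zero_add] at h
      exact h
    have t1 := hIoiNeg j j
    have t2 : Tendsto (fun L : ℕ =>
        ((bernoulli (j+1):ℝ):ℂ) * (hh s a j ((N+L:ℕ):ℝ) - hh s a j (N:ℝ))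
          - ((j:ℂ)+1) * ∫ t in (N:ℝ)..((N+L:ℕ):ℝ),
              (periodicBernoulli j t : ℂ) * hh s a j t) atTop
        (𝓝 (((bernoulli (j+1):ℝ):ℂ) * (0 - hh s a j (N:ℝ)) - ((j:ℂ)+1) * A j)) := by
      refine Tendsto.sub ?_ ?_
      · exact ((tendsto_hh_zero hs ha j N hN).sub_const _).const_mul _
      · exact (tendsto_intIoi N _ (integrableOn_pB_hh hs ha N j j hN)).const_mul _
    have hfin := tendsto_nhds_unique t1 (t2.congr fun L => (hid L).symm)
    linear_combination -hfin
  -- Recursion for A j / j!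
  set Cc : ℕ → ℂ := fun j => A j / (j.factorial : ℂ) with hCc
  have hCrec : ∀ j : ℕ, 1 ≤ j → Cc (j+1)
      = Cc j + ((bernoulli (j+1):ℝ):ℂ) / ((j+1).factorial : ℂ) * hh s a j (N:ℝ) := by
    intro j hj
    have h := hstepA j hj
    have hf1 : (((j+1).factorial : ℕ) : ℂ) = ((j:ℂ)+1) * (j.factorial : ℂ) := by
      rw [Nat.factorial_succ]; push_cast; ring
    have hne : (j.factorial : ℂ) ≠ 0 := Nat.cast_ne_zero.mpr (Nat.factorial_ne_zero j)
    have hne1 : ((j:ℂ)+1) ≠ 0 := by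
      have := Nat.cast_ne_zero (R := ℂ).mpr (Nat.succ_ne_zero j)
      push_cast at this
      exact this
    rw [hCc]
    simp only []
    rw [h, hf1]
    field_simp <;> ring
  have hCunroll : ∀ m : ℕ, 1 ≤ m → Cc m
      = Cc 1 + ∑ j ∈ Finset.Ico 1 m,
          ((bernoulli (j+1):ℝ):ℂ) / ((j+1).factorial : ℂ) * hh s a j (N:ℝ) := by
    intro m hm
    induction m, hm using Nat.le_induction with
    | base => simp
    | succ m hm ih =>
      rw [Finset.sum_Ico_succ_top hm, hCrec m hm, ih]
      ring
  have hprune : ∀ m : ℕ, 1 ≤ m →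
      (∑ j ∈ Finset.Ico 1 (2*m),
          ((bernoulli (j+1):ℝ):ℂ) / ((j+1).factorial : ℂ) * hh s a j (N:ℝ))
        = ∑ k ∈ Finset.Icc 1 m,
            ((bernoulli (2*k) : ℝ):ℂ) / ((2*k).factorial : ℂ) * hh s a (2*k-1) (N:ℝ) := by
    intro m hm
    induction m, hm using Nat.le_induction with
    | base =>
      rw [show (2*1 : ℕ) = 1+1 from rfl, Finset.sum_Ico_succ_top (le_refl 1),
        Finset.Ico_self, Finset.sum_empty, zero_add, Finset.Icc_self,
        Finset.sum_singleton]
    | succ m hm ih =>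
      have h1 : 2*(m+1) = (2*m+1)+1 := by ring
      have hz : _root_.bernoulli (2*m+1) = 0 := by
        rw [bernoulli_eq_bernoulli'_of_ne_one (by omega)]
        exact bernoulli'_eq_zero_of_odd ⟨m, by ring⟩ (by omega)
      have e1 : 2*m+1+1 = 2*(m+1) := by ring
      have e2 : 2*(m+1)-1 = 2*m+1 := by omega
      rw [h1, Finset.sum_Ico_succ_top (by omega), Finset.sum_Ico_succ_top (by omega), ih,
        Finset.sum_Icc_succ_top (by omega : 1 ≤ m+1), hz, e1]
      rw [e2]
      push_cast
      ring
  -- Assemble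
  have hA1 : A 1 = Cc 1 := by
    rw [hCc]
    simp [Nat.factorial_one]
  have hC2M := hCunroll (2*M) (by omega)
  rw [hprune M hM] at hC2M
  have hCc2M : Cc (2*M) = A (2*M) / ((2*M).factorial : ℂ) := rfl
  have hI := integral_hh0 hs ha N hN
  -- hbase : -(A 1) = tail + (1/2)*(0 - hh0 N) - ∫Ioi hh0
  rw [hI] at hbase
  rw [hCc2M] at hC2M
  rw [hA1] at hbase
  linear_combination -hbase + hC2M

lemma hh_def (s a : ℂ) (m : ℕ) (t : ℝ) :
    hh s a m t = (ascPochhammer ℂ m).eval s * (a + (t:ℂ)) ^ (-(s + m)) := rfl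

lemma main (s a : ℂ) (hs : 1 < s.re) (ha : 0 < a.re) (N M : ℕ) (hN : 1 ≤ N) (hM : 1 ≤ M) :
    ∑' k : ℕ, (a + (k : ℂ)) ^ (-s) =
      (∑ k ∈ Finset.range N, (a + (k : ℂ)) ^ (-s))
      + (a + (N : ℂ)) ^ (1 - s) / (s - 1)
      + (a + (N : ℂ)) ^ (-s) *
          (1 / 2 + ∑ k ∈ Finset.Icc 1 M,
            ((bernoulli (2 * k) : ℂ) / (Nat.factorial (2 * k) : ℂ)) *
              (Polynomial.eval s (ascPochhammer ℂ (2 * k - 1)) / (a + (N : ℂ)) ^ (2 * k - 1)))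
      + -∫ t in Set.Ioi (N : ℝ),
          ((periodicBernoulli (2 * M) t : ℂ) / (Nat.factorial (2 * M) : ℂ)) *
            Polynomial.eval s (ascPochhammer ℂ (2 * M)) *
            (a + (t : ℂ)) ^ (-(s + 2 * (M : ℂ))) := by
  have hcast : ∀ k : ℕ, (((k:ℕ):ℝ):ℂ) = ((k:ℕ):ℂ) := fun k => by push_cast; rfl
  have hf : ∀ k : ℕ, (a + (k:ℂ)) ^ (-s) = hh s a 0 ((k:ℕ):ℝ) := by
    intro k
    rw [hh_zero, hcast]
  -- summability
  have hsum0 := summable_hh_tail hs ha N hN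
  have hsum : Summable (fun k : ℕ => (a + (k:ℂ)) ^ (-s)) := by
    refine (summable_nat_add_iff N).mp (hsum0.congr fun i => ?_)
    rw [hf (i+N), Nat.add_comm]
  have hsplit := Summable.sum_add_tsum_nat_add N hsum
  have htail' : (∑' i : ℕ, (a + ((i + N : ℕ):ℂ)) ^ (-s)) = ∑' i, hh s a 0 ((N+i:ℕ):ℝ) :=
    tsum_congr fun i => by rw [hf (i+N), Nat.add_comm]
  have htail := tail_eq hs ha N M hN hM
  -- z facts
  have hzcast : ((N:ℝ):ℂ) = (N:ℂ) := hcast N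
  have hz0 : a + (N:ℂ) ≠ 0 := by
    have hre : 0 < (a + (N:ℂ)).re := by
      simp only [Complex.add_re, Complex.natCast_re]
      have : (0:ℝ) ≤ N := Nat.cast_nonneg N
      linarith
    intro h; rw [h] at hre; simp at hre
  have hhh0N : hh s a 0 ((N:ℕ):ℝ) = (a + (N:ℂ)) ^ (-s) := by rw [hh_zero, hzcast]
  have hsplitPow : ∀ r : ℕ, hh s a r ((N:ℕ):ℝ)
      = (ascPochhammer ℂ r).eval s * ((a + (N:ℂ)) ^ (-s) / (a + (N:ℂ)) ^ r) := by
    intro r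
    rw [hh_def, hzcast]
    congr 1
    have h1 : (a+(N:ℂ)) ^ (-(r:ℂ)) = ((a+(N:ℂ)) ^ r)⁻¹ := by
      rw [Complex.cpow_neg, Complex.cpow_natCast]
    rw [show -(s + (r:ℂ)) = -s + -(r:ℂ) by ring, Complex.cpow_add _ _ hz0, h1, div_eq_mul_inv]
  -- T-term
  have hT : hh s a 0 ((N:ℕ):ℝ) / 2
      + (∑ k ∈ Finset.Icc 1 M,
          ((bernoulli (2*k) : ℝ):ℂ) / ((2*k).factorial : ℂ) * hh s a (2*k-1) ((N:ℕ):ℝ))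
      = (a + (N : ℂ)) ^ (-s) *
          (1 / 2 + ∑ k ∈ Finset.Icc 1 M,
            ((bernoulli (2 * k) : ℂ) / (Nat.factorial (2 * k) : ℂ)) *
              (Polynomial.eval s (ascPochhammer ℂ (2 * k - 1)) / (a + (N : ℂ)) ^ (2 * k - 1))) := by
    rw [hhh0N, mul_add, Finset.mul_sum]
    congr 1
    · ring
    · refine Finset.sum_congr rfl fun k _ => ?_
      rw [hsplitPow (2*k-1)]
      have : ((bernoulli (2*k) : ℝ):ℂ) = (bernoulli (2*k) : ℂ) := by push_cast; rfl
      rw [this]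
      ring
  -- R-term
  have hR : (∫ t in Set.Ioi (N : ℝ),
        ((periodicBernoulli (2 * M) t : ℂ) / (Nat.factorial (2 * M) : ℂ)) *
          Polynomial.eval s (ascPochhammer ℂ (2 * M)) *
          (a + (t : ℂ)) ^ (-(s + 2 * (M : ℂ))))
      = (∫ t in Set.Ioi (N:ℝ), (periodicBernoulli (2*M) t : ℂ) * hh s a (2*M) t)
          / ((2*M).factorial : ℂ) := by
    have he : -(s + 2 * (M:ℂ)) = -(s + ((2*M : ℕ):ℂ)) := by push_cast; ring
    have hfun : (fun t : ℝ => ((periodicBernoulli (2 * M) t : ℂ) / (Nat.factorial (2 * M) : ℂ)) *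
          Polynomial.eval s (ascPochhammer ℂ (2 * M)) * (a + (t : ℂ)) ^ (-(s + 2 * (M : ℂ))))
        = fun t : ℝ => ((periodicBernoulli (2*M) t : ℂ) * hh s a (2*M) t)
            / ((2*M).factorial : ℂ) := by
      funext t
      rw [hh_def, he]
      ring
    rw [hfun, integral_div]
  -- assemble
  calc ∑' k : ℕ, (a + (k:ℂ)) ^ (-s)
      = (∑ k ∈ Finset.range N, (a + (k:ℂ)) ^ (-s)) + ∑' i, (a + ((i + N : ℕ):ℂ)) ^ (-s) := by
        rw [hsplit]
    _ = _ := by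
        rw [htail', htail, hR, ← hT]
        push_cast
        ring

end EMHurwitz

/-- Euler-Maclaurin summation for the Hurwitz zeta series: for `Re(a) > 0`, `Re(s) > 1` and
integers `N, M ≥ 1`, `∑_{k=0}^∞ (a+k)^{-s} = S + I + T + R` with
`S = ∑_{k=0}^{N-1} (a+k)^{-s}`, `I = (a+N)^{1-s}/(s-1)`,
`T = (a+N)^{-s} (1/2 + ∑_{k=1}^M B_{2k}/(2k)! · (s)_{2k-1}/(a+N)^{2k-1})`,
`R = -∫_N^∞ B̃_{2M}(t)/(2M)! · (s)_{2M} (a+t)^{-(s+2M)} dt`. -/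
theorem euler_maclaurin_hurwitz_series
    (s a : ℂ) (hs : 1 < s.re) (ha : 0 < a.re) (N M : ℕ) (hN : 1 ≤ N) (hM : 1 ≤ M) :
    ∑' k : ℕ, (a + (k : ℂ)) ^ (-s) =
      (∑ k ∈ Finset.range N, (a + (k : ℂ)) ^ (-s))
      + (a + (N : ℂ)) ^ (1 - s) / (s - 1)
      + (a + (N : ℂ)) ^ (-s) *
          (1 / 2 + ∑ k ∈ Finset.Icc 1 M,
            ((bernoulli (2 * k) : ℂ) / (Nat.factorial (2 * k) : ℂ)) *
              (Polynomial.eval s (ascPochhammer ℂ (2 * k - 1)) / (a + (N : ℂ)) ^ (2 * k - 1)))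
      + -∫ t in Set.Ioi (N : ℝ),
          ((periodicBernoulli (2 * M) t : ℂ) / (Nat.factorial (2 * M) : ℂ)) *
            Polynomial.eval s (ascPochhammer ℂ (2 * M)) *
            (a + (t : ℂ)) ^ (-(s + 2 * (M : ℂ))) :=
  EMHurwitz.main s a hs ha N M hN hM
end

section
/- Let $s = \sigma + \tau i$ and $a = \alpha + \beta i$ be complex numbers and let $N, M$ be positive integers such that $\alpha + N > 1$ and $\sigma + 2M > 1$. Then for every integer $k \geq 0$, $\int_N^{\infty} \bigl| \log(a+t)^k \, (a+t)^{-(s+2M)} \bigr| \, dt \leq K \cdot J_k(N + \alpha, \, \sigma + 2M, \, C)$, where $C = \tfrac{1}{2}\log\bigl(1 + \tfrac{\beta^2}{(\alpha+N)^2}\bigr) + \arctan\bigl(\tfrac{|\beta|}{\alpha+N}\bigr)$ and $K = \exp\bigl(\max\bigl(0, \, \tau \arctan\bigl(\tfrac{\beta}{\alpha+N}\bigr)\bigr)\bigr)$. -/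
open MeasureTheory

/-- `J_k(A,B,C) = ∫_A^∞ t^{-B} (C + log t)^k dt`. -/
noncomputable def J (A B C : ℝ) (k : ℕ) : ℝ :=
  ∫ t in Set.Ioi A, t ^ (-B) * (C + Real.log t) ^ k

lemma my_arctan_mono : Monotone Real.arctan := Real.arctan_strictMono.monotone

lemma my_arctan_nonneg {x : ℝ} (hx : 0 ≤ x) : 0 ≤ Real.arctan x := by
  simpa [Real.arctan_zero] using my_arctan_mono hx

lemma my_arctan_nonpos {x : ℝ} (hx : x ≤ 0) : Real.arctan x ≤ 0 := by
  simpa [Real.arctan_zero] using my_arctan_mono hx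

lemma my_abs_arctan (x : ℝ) : |Real.arctan x| = Real.arctan |x| := by
  rcases le_or_gt 0 x with h | h
  · rw [abs_of_nonneg h, abs_of_nonneg (my_arctan_nonneg h)]
  · have h' : Real.arctan x < 0 := by
      simpa [Real.arctan_zero] using Real.arctan_strictMono h
    rw [abs_of_neg h, abs_of_neg h', ← Real.arctan_neg]

lemma my_arg_eq_arctan {z : ℂ} (hz : 0 < z.re) :
    Complex.arg z = Real.arctan (z.im / z.re) := by
  have h1 : -(Real.pi / 2) < Complex.arg z :=
    Complex.neg_pi_div_two_lt_arg_iff.mpr (Or.inl hz)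
  have h2 : Complex.arg z < Real.pi / 2 :=
    Complex.arg_lt_pi_div_two_iff.mpr (Or.inl hz)
  rw [← Complex.tan_arg z, Real.arctan_tan h1 h2]

/-- The key sign/monotonicity fact for the argument factor. -/
lemma my_key_arg (τ β p q : ℝ) (hq : 0 < q) (hpq : q ≤ p) :
    τ * Real.arctan (β / p) ≤ max 0 (τ * Real.arctan (β / q)) := by
  have hp : 0 < p := lt_of_lt_of_le hq hpq
  rcases le_total 0 β with hβ | hβ <;> rcases le_total 0 τ with hτ | hτ
  · refine le_max_of_le_right ?_
    refine mul_le_mul_of_nonneg_left (my_arctan_mono ?_) hτ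
    exact div_le_div_of_nonneg_left hβ hq hpq
  · refine le_max_of_le_left ?_
    exact mul_nonpos_of_nonpos_of_nonneg hτ (my_arctan_nonneg (div_nonneg hβ hp.le))
  · refine le_max_of_le_left ?_
    exact mul_nonpos_of_nonneg_of_nonpos hτ (my_arctan_nonpos (div_nonpos_of_nonpos_of_nonneg hβ hp.le))
  · refine le_max_of_le_right ?_
    refine mul_le_mul_of_nonpos_left (my_arctan_mono ?_) hτ
    rw [div_le_div_iff₀ hq hp]
    nlinarith
  
lemma my_integral_Ioi_shift (f : ℝ → ℝ) (c d : ℝ) :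
    ∫ t in Set.Ioi c, f (t + d) = ∫ u in Set.Ioi (c + d), f u := by
  have h := (measurePreserving_add_right (volume : Measure ℝ) d).setIntegral_preimage_emb
    (MeasurableEquiv.addRight d).measurableEmbedding f (Set.Ioi (c + d))
  have hpre : (· + d) ⁻¹' Set.Ioi (c + d) = Set.Ioi c := by
    ext x; simp
  rwa [hpre] at h

lemma my_integrableOn_shift {f : ℝ → ℝ} {c d : ℝ}
    (hf : IntegrableOn f (Set.Ioi (c + d))) :
    IntegrableOn (fun t => f (t + d)) (Set.Ioi c) := by
  have hmp := (measurePreserving_add_right (volume : Measure ℝ) d).restrict_preimage_emb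
    (MeasurableEquiv.addRight d).measurableEmbedding (Set.Ioi (c + d))
  have hpre : (· + d) ⁻¹' Set.Ioi (c + d) = Set.Ioi c := by
    ext x; simp
  rw [hpre] at hmp
  exact (hmp.integrable_comp_emb (MeasurableEquiv.addRight d).measurableEmbedding).mpr hf

/-- Integrability of the `J` integrand. -/
lemma my_integrableJ {A B C : ℝ} (hA : 1 < A) (hB : 1 < B) (hC : 0 ≤ C) (k : ℕ) :
    IntegrableOn (fun t : ℝ => t ^ (-B) * (C + Real.log t) ^ k) (Set.Ioi A) := by
  set ε : ℝ := (B - 1) / (2 * (k + 1)) with hε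
  have hεpos : 0 < ε := by
    apply div_pos (by linarith)
    positivity
  have hmaj : IntegrableOn (fun t : ℝ => (C + 1 / ε) ^ k * t ^ (-((B + 1) / 2)))
      (Set.Ioi A) :=
    (integrableOn_Ioi_rpow_of_lt (by linarith) (by linarith)).const_mul _
  refine Integrable.mono' hmaj ?_ ?_
  · apply AEStronglyMeasurable.mul
    · exact (measurable_id.pow_const (-B)).aestronglyMeasurable
    · exact ((measurable_const.add Real.measurable_log).pow_const k).aestronglyMeasurable
  · filter_upwards [ae_restrict_mem measurableSet_Ioi] with t ht
    have ht1 : (1 : ℝ) < t := lt_trans hA ht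
    have ht0 : 0 < t := by linarith
    have hlog : 0 ≤ Real.log t := Real.log_nonneg ht1.le
    have htε1 : 1 ≤ t ^ ε := Real.one_le_rpow ht1.le hεpos.le
    have hbase : C + Real.log t ≤ (C + 1 / ε) * t ^ ε := by
      have h1 : Real.log t ≤ t ^ ε / ε := Real.log_le_rpow_div ht0.le hεpos
      have h2 : C ≤ C * t ^ ε := le_mul_of_one_le_right hC htε1
      have h3 : t ^ ε / ε = (1 / ε) * t ^ ε := by ring
      rw [add_mul]
      rw [h3] at h1
      linarith
    have hnonneg : 0 ≤ C + Real.log t := by linarith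
    rw [Real.norm_eq_abs, abs_of_nonneg (by positivity)]
    have hpow : (C + Real.log t) ^ k ≤ ((C + 1 / ε) * t ^ ε) ^ k :=
      pow_le_pow_left₀ hnonneg hbase k
    have hstep : t ^ (-B) * (C + Real.log t) ^ k
        ≤ t ^ (-B) * ((C + 1 / ε) * t ^ ε) ^ k := by
      exact mul_le_mul_of_nonneg_left hpow (Real.rpow_nonneg ht0.le _)
    refine hstep.trans ?_
    rw [mul_pow, ← Real.rpow_natCast (t ^ ε) k, ← Real.rpow_mul ht0.le]
    rw [show t ^ (-B) * ((C + 1 / ε) ^ k * t ^ (ε * k)) =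
      (C + 1 / ε) ^ k * (t ^ (-B) * t ^ (ε * k)) by ring]
    rw [← Real.rpow_add ht0]
    have hexp : -B + ε * k ≤ -((B + 1) / 2) := by
      have h1 : ε * k ≤ ε * (k + 1) := by
        refine mul_le_mul_of_nonneg_left ?_ hεpos.le
        exact_mod_cast by linarith [Nat.cast_nonneg (α := ℝ) k]
      have h2 : ε * (k + 1) = (B - 1) / 2 := by
        rw [hε]; field_simp
      linarith
    refine mul_le_mul_of_nonneg_left ?_ (by positivity)
    exact Real.rpow_le_rpow_of_exponent_le ht1.le hexp

/-- Key coefficient bound in Theorem 1 of the paper: with `s = σ + τi`, `a = α + βi`,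
positive integers `N, M` such that `α + N > 1` and `σ + 2M > 1`, for every `k ≥ 0`
`∫_N^∞ |log(a+t)^k (a+t)^{-(s+2M)}| dt ≤ K · J_k(N+α, σ+2M, C)` where
`C = (1/2) log(1 + β²/(α+N)²) + arctan(|β|/(α+N))` and
`K = exp(max(0, τ arctan(β/(α+N))))`. -/
theorem hurwitz_remainder_coefficient_bound
    (s a : ℂ) (N M : ℕ) (hN : 0 < N) (hM : 0 < M)
    (haN : 1 < a.re + N) (hsM : 1 < s.re + 2 * M) (k : ℕ) :
    (∫ t in Set.Ioi (N : ℝ),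
        ‖Complex.log (a + (t : ℂ)) ^ k * (a + (t : ℂ)) ^ (-(s + 2 * (M : ℂ)))‖) ≤
      Real.exp (max 0 (s.im * Real.arctan (a.im / (a.re + N)))) *
        J (N + a.re) (s.re + 2 * M)
          (1 / 2 * Real.log (1 + a.im ^ 2 / (a.re + N) ^ 2) +
            Real.arctan (|a.im| / (a.re + N))) k := by
  have hA : (1:ℝ) < (N:ℝ) + a.re := by linarith
  have haN' : (0:ℝ) < a.re + N := by linarith
  set B : ℝ := s.re + 2 * M with hBdef
  set C : ℝ := 1/2 * Real.log (1 + a.im ^ 2 / (a.re + N) ^ 2) +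
      Real.arctan (|a.im| / (a.re + N)) with hCdef
  set K : ℝ := Real.exp (max 0 (s.im * Real.arctan (a.im / (a.re + N)))) with hKdef
  have hB : 1 < B := hsM
  have hC : 0 ≤ C := by
    have h1 : 0 ≤ Real.log (1 + a.im ^ 2 / (a.re + N) ^ 2) :=
      Real.log_nonneg (le_add_of_nonneg_right (by positivity))
    have h2 : 0 ≤ Real.arctan (|a.im| / (a.re + N)) :=
      my_arctan_nonneg (by positivity)
    rw [hCdef]; linarith
  set g : ℝ → ℝ := fun u => u ^ (-B) * (C + Real.log u) ^ k with hgdef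
  have hgint : IntegrableOn g (Set.Ioi ((N:ℝ) + a.re)) := my_integrableJ hA hB hC k
  have hint2 : IntegrableOn (fun t => K * g (t + a.re)) (Set.Ioi (N:ℝ)) :=
    (my_integrableOn_shift hgint).const_mul K
  -- the pointwise bound
  have hmono : ∀ t ∈ Set.Ioi ((N:ℝ)),
      ‖Complex.log (a + (t : ℂ)) ^ k * (a + (t : ℂ)) ^ (-(s + 2 * (M : ℂ)))‖
        ≤ K * g (t + a.re) := by
    intro t ht
    rw [Set.mem_Ioi] at ht
    set z : ℂ := a + (t : ℂ) with hzdef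
    have hzre : z.re = a.re + t := by simp [hzdef]
    have hzim : z.im = a.im := by simp [hzdef]
    have htN : a.re + N ≤ a.re + t := by linarith
    have hre1 : 1 < a.re + t := by linarith
    have hrepos : 0 < z.re := by rw [hzre]; linarith
    have hz0 : z ≠ 0 := by
      intro h; rw [h] at hrepos; simp at hrepos
    have habs : a.re + t ≤ ‖z‖ := by
      rw [← hzre]; exact Complex.re_le_norm z
    have habspos : 0 < ‖z‖ := lt_of_lt_of_le (by linarith) habs
    -- argument
    have harg : Complex.arg z = Real.arctan (a.im / (a.re + t)) := by
      rw [my_arg_eq_arctan hrepos, hzim, hzre]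
    -- cpow modulus
    have hre_w : (-(s + 2 * (M : ℂ))).re = -B := by
      simp [hBdef]
    have him_w : (-(s + 2 * (M : ℂ))).im = -s.im := by
      simp
    have habspow : ‖z ^ (-(s + 2 * (M : ℂ)))‖
        = ‖z‖ ^ (-B) * Real.exp (s.im * Complex.arg z) := by
      rw [Complex.norm_cpow_of_ne_zero hz0, hre_w, him_w,
        show Complex.arg z * (-s.im) = -(s.im * Complex.arg z) by ring,
        Real.exp_neg, div_eq_mul_inv, inv_inv]
    have hexp : Real.exp (s.im * Complex.arg z) ≤ K := by
      rw [harg, hKdef]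
      exact Real.exp_le_exp.mpr (my_key_arg s.im a.im _ _ haN' htN)
    have hrpow : ‖z‖ ^ (-B) ≤ (a.re + t) ^ (-B) :=
      Real.rpow_le_rpow_of_nonpos (by linarith) habs (by linarith)
    have e2 : ‖z ^ (-(s + 2 * (M : ℂ)))‖ ≤ (a.re + t) ^ (-B) * K := by
      rw [habspow]
      exact mul_le_mul hrpow hexp (Real.exp_pos _).le (Real.rpow_nonneg (by linarith) _)
    -- log modulus
    have hlogabs : Real.log (‖z‖)
        = Real.log (a.re + t) + 1/2 * Real.log (1 + a.im ^ 2 / (a.re + t) ^ 2) := by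
      have hsq : ‖z‖ ^ 2 = (a.re + t) ^ 2 * (1 + a.im ^ 2 / (a.re + t) ^ 2) := by
        rw [Complex.sq_norm, Complex.normSq_apply, hzre, hzim]
        field_simp
      have h2 : 2 * Real.log (‖z‖)
          = 2 * Real.log (a.re + t) + Real.log (1 + a.im ^ 2 / (a.re + t) ^ 2) := by
        rw [show (2:ℝ) * Real.log (‖z‖) = Real.log (‖z‖ ^ 2) by
            rw [Real.log_pow]; push_cast; ring, hsq,
          Real.log_mul (by positivity) (by positivity),
          show Real.log ((a.re + t) ^ 2) = 2 * Real.log (a.re + t) by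
            rw [Real.log_pow]; push_cast; ring]
      linarith
    have hlog_le : ‖Complex.log z‖ ≤ C + Real.log (a.re + t) := by
      have h0 : ‖Complex.log z‖
          ≤ |Real.log (‖z‖)| + |Complex.arg z| := by
        simpa [Complex.log_re, Complex.log_im] using
          Complex.norm_le_abs_re_add_abs_im (Complex.log z)
      have h1 : |Real.log (‖z‖)| = Real.log (‖z‖) :=
        abs_of_nonneg (Real.log_nonneg (by linarith))
      have h2 : Real.log (1 + a.im ^ 2 / (a.re + t) ^ 2)
          ≤ Real.log (1 + a.im ^ 2 / (a.re + N) ^ 2) := by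
        refine Real.log_le_log (by positivity) ?_
        have : a.im ^ 2 / (a.re + t) ^ 2 ≤ a.im ^ 2 / (a.re + N) ^ 2 :=
          div_le_div_of_nonneg_left (by positivity) (by positivity) (by nlinarith)
        linarith
      have h3 : |Complex.arg z| ≤ Real.arctan (|a.im| / (a.re + N)) := by
        rw [harg, my_abs_arctan, abs_div, abs_of_pos (by linarith : (0:ℝ) < a.re + t)]
        refine my_arctan_mono ?_
        exact div_le_div_of_nonneg_left (abs_nonneg _) haN' htN
      rw [hCdef]
      calc ‖Complex.log z‖ ≤ |Real.log (‖z‖)| + |Complex.arg z| := h0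
        _ = Real.log (‖z‖) + |Complex.arg z| := by rw [h1]
        _ ≤ Real.log (a.re + t) + 1/2 * Real.log (1 + a.im ^ 2 / (a.re + t) ^ 2)
            + Real.arctan (|a.im| / (a.re + N)) := by rw [hlogabs]; linarith
        _ ≤ _ := by linarith
    have hClog : 0 ≤ C + Real.log (a.re + t) := by
      have := Real.log_nonneg hre1.le; linarith
    have e1 : ‖Complex.log z‖ ^ k ≤ (C + Real.log (a.re + t)) ^ k :=
      pow_le_pow_left₀ (norm_nonneg _) hlog_le k
    calc ‖Complex.log z ^ k * z ^ (-(s + 2 * (M : ℂ)))‖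
        = ‖Complex.log z‖ ^ k * ‖z ^ (-(s + 2 * (M : ℂ)))‖ := by
          rw [norm_mul, norm_pow]
      _ ≤ (C + Real.log (a.re + t)) ^ k * ((a.re + t) ^ (-B) * K) := by
          exact mul_le_mul e1 e2 (norm_nonneg _) (pow_nonneg hClog k)
      _ = K * g (t + a.re) := by
          rw [hgdef]
          simp only []
          rw [add_comm t a.re]
          ring
  calc (∫ t in Set.Ioi (N : ℝ),
        ‖Complex.log (a + (t : ℂ)) ^ k * (a + (t : ℂ)) ^ (-(s + 2 * (M : ℂ)))‖)
      ≤ ∫ t in Set.Ioi (N : ℝ), K * g (t + a.re) := by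
        refine integral_mono_of_nonneg ?_ hint2 ?_
        · exact Filter.Eventually.of_forall fun t => norm_nonneg _
        · filter_upwards [ae_restrict_mem measurableSet_Ioi] with t ht
          exact hmono t ht
    _ = K * ∫ t in Set.Ioi (N : ℝ), g (t + a.re) := integral_const_mul K _
    _ = K * ∫ u in Set.Ioi ((N : ℝ) + a.re), g u := by rw [my_integral_Ioi_shift]
    _ = K * J ((N : ℝ) + a.re) B C k := rfl
end
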